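/- arXiv:1012.0623 — 2 statements merged into one kernel-verified Lean document; each statement's English description precedes it below -/
import Mathlib

section
/- Every invariant convex set S ⊆ Sⁿ that is closed can be represented as an intersection of sublevel sets of elementary convex graph invariants: S = ⋂_{P ∈ 𝒫} {A ∈ Sⁿ : Θ_P(A) ≤ α_P} for some 𝒫 ⊆ Sⁿ and reals α_P. -/
open Matrix

noncomputable def permConj {n : ℕ} (σ : Equiv.Perm (Fin n))
    (A : Matrix (Fin n) (Fin n) ℝ) : Matrix (Fin n) (Fin n) ℝ :=
  (σ.permMatrix ℝ) * A * (σ.permMatrix ℝ)ᵀ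

/-- The elementary convex graph invariant `Θ_P(A) = max_Π tr(P Π A Πᵀ)`. -/
noncomputable def theta {n : ℕ} (P A : Matrix (Fin n) (Fin n) ℝ) : ℝ :=
  (Finset.univ : Finset (Equiv.Perm (Fin n))).sup' Finset.univ_nonempty
    (fun σ => (P * permConj σ A).trace)

instance matLC (n : ℕ) : LocallyConvexSpace ℝ (Matrix (Fin n) (Fin n) ℝ) :=
  (inferInstance : LocallyConvexSpace ℝ (Fin n → Fin n → ℝ))

lemma permMatrix_one (n : ℕ) : (Equiv.Perm.permMatrix ℝ (1 : Equiv.Perm (Fin n))) = 1 := by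
  ext i j
  simp [Equiv.Perm.permMatrix, PEquiv.toMatrix, Equiv.toPEquiv, Matrix.one_apply, eq_comm]

lemma permConj_one {n : ℕ} (A : Matrix (Fin n) (Fin n) ℝ) : permConj 1 A = A := by
  simp [permConj, permMatrix_one]

lemma trace_form {n : ℕ} (f : Matrix (Fin n) (Fin n) ℝ →ₗ[ℝ] ℝ)
    (X : Matrix (Fin n) (Fin n) ℝ) :
    ((Matrix.of fun i j => f (single j i 1)) * X).trace = f X := by
  conv_rhs => rw [matrix_eq_sum_single X]
  rw [map_sum]
  simp only [Matrix.trace, Matrix.diag, Matrix.mul_apply, Matrix.of_apply]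
  rw [Finset.sum_comm]
  refine Finset.sum_congr rfl fun i _ => ?_
  rw [map_sum]
  refine Finset.sum_congr rfl fun j _ => ?_
  have h : single i j (X i j) = (X i j) • single i j (1 : ℝ) := by
    rw [smul_single, smul_eq_mul, mul_one]
  rw [h, _root_.map_smul, smul_eq_mul, mul_comm]

lemma theta_le_iff {n : ℕ} (P A : Matrix (Fin n) (Fin n) ℝ) (c : ℝ) :
    theta P A ≤ c ↔ ∀ σ : Equiv.Perm (Fin n), (P * permConj σ A).trace ≤ c := by
  rw [theta, Finset.sup'_le_iff]
  simp

lemma le_theta {n : ℕ} (P A : Matrix (Fin n) (Fin n) ℝ) : (P * A).trace ≤ theta P A := by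
  have := Finset.le_sup' (fun σ : Equiv.Perm (Fin n) => (P * permConj σ A).trace)
    (Finset.mem_univ (1 : Equiv.Perm (Fin n)))
  rwa [permConj_one] at this

theorem stmt2 (n : ℕ) (S : Set (Matrix (Fin n) (Fin n) ℝ))
    (hsymm : ∀ A ∈ S, A.IsSymm)
    (hconv : Convex ℝ S)
    (hclosed : IsClosed S)
    (hinv : ∀ A ∈ S, ∀ σ : Equiv.Perm (Fin n), permConj σ A ∈ S) :
    ∃ (Ps : Set (Matrix (Fin n) (Fin n) ℝ)) (α : Matrix (Fin n) (Fin n) ℝ → ℝ),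
      S = {A : Matrix (Fin n) (Fin n) ℝ | A.IsSymm} ∩
        ⋂ P ∈ Ps, {A : Matrix (Fin n) (Fin n) ℝ | theta P A ≤ α P} := by
  rcases S.eq_empty_or_nonempty with hS | ⟨B₀, hB₀⟩
  · refine ⟨{0}, fun _ => -1, ?_⟩
    rw [hS]
    symm
    rw [Set.eq_empty_iff_forall_notMem]
    rintro A ⟨-, hA⟩
    have := Set.mem_iInter₂.mp hA 0 rfl
    have h0 : theta 0 A = 0 := by
      rw [theta]
      simp [Finset.sup'_const]
    rw [Set.mem_setOf_eq, h0] at this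
    norm_num at this
  · refine ⟨{P | BddAbove ((fun B => theta P B) '' S)},
      fun P => sSup ((fun B => theta P B) '' S), ?_⟩
    ext A
    constructor
    · intro hA
      refine ⟨hsymm A hA, Set.mem_iInter₂.mpr fun P hP => ?_⟩
      exact le_csSup hP ⟨A, hA, rfl⟩
    · rintro ⟨hAs, hA⟩
      by_contra hAn
      obtain ⟨f, u, hfS, hfA⟩ := geometric_hahn_banach_closed_point hconv hclosed hAn
      set P : Matrix (Fin n) (Fin n) ℝ :=
        Matrix.of (fun i j => f (single j i 1)) with hP
      have htr : ∀ X, (P * X).trace = f X := fun X => trace_form (f : _ →L[ℝ] ℝ).toLinearMap X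
      have hbound : ∀ B ∈ S, theta P B ≤ u := by
        intro B hB
        rw [theta_le_iff]
        intro σ
        rw [htr]
        exact (hfS _ (hinv B hB σ)).le
      have hmem : P ∈ {P | BddAbove ((fun B => theta P B) '' S)} := by
        refine ⟨u, ?_⟩
        rintro x ⟨B, hB, rfl⟩
        exact hbound B hB
      have h1 : theta P A ≤ sSup ((fun B => theta P B) '' S) :=
        Set.mem_iInter₂.mp hA P hmem
      have h2 : sSup ((fun B => theta P B) '' S) ≤ u := by
        refine csSup_le ⟨theta P B₀, B₀, hB₀, rfl⟩ ?_
        rintro x ⟨B, hB, rfl⟩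
        exact hbound B hB
      have h3 : u < theta P A := lt_of_lt_of_le hfA (by rw [← htr A]; exact le_theta P A)
      linarith
end

section
/- The extreme points of the set {x ∈ ℝⁿ : x is majorized by d} (the permutahedron of d ∈ ℝⁿ) are exactly the permutations Πd of d, for Π ∈ Sym(n). -/
/-- The entries of `x` sorted in descending order. -/
noncomputable def sortDesc {n : ℕ} (x : Fin n → ℝ) : Fin n → ℝ :=
  fun i => (x ∘ Tuple.sort x) i.rev

/-- The sum of the `k` largest entries of `x`. -/
noncomputable def topSum {n : ℕ} (k : ℕ) (x : Fin n → ℝ) : ℝ :=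
  ∑ i : Fin n, if (i : ℕ) < k then sortDesc x i else 0

/-- `x` is majorized by `d`. -/
def MajorizedBy {n : ℕ} (x d : Fin n → ℝ) : Prop :=
  (∀ k : ℕ, k ≤ n - 1 → topSum k x ≤ topSum k d) ∧ ∑ i, x i = ∑ i, d i

noncomputable def sortPerm {n : ℕ} (x : Fin n → ℝ) : Equiv.Perm (Fin n) :=
  Fin.revPerm.trans (Tuple.sort x)

lemma sortDesc_eq {n : ℕ} (x : Fin n → ℝ) : sortDesc x = x ∘ (sortPerm x) := rfl

lemma antitone_sortDesc {n : ℕ} (x : Fin n → ℝ) : Antitone (sortDesc x) := by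
  intro i j hij
  exact Tuple.monotone_sort x (Fin.rev_le_rev.2 hij)

def lowSet (n k : ℕ) : Finset (Fin n) := Finset.univ.filter (fun i => (i : ℕ) < k)

lemma mem_lowSet {n k : ℕ} {i : Fin n} : i ∈ lowSet n k ↔ (i : ℕ) < k := by
  simp [lowSet]

lemma card_lowSet {n k : ℕ} (hk : k ≤ n) : (lowSet n k).card = k := by
  have h : (lowSet n k).image Fin.val = Finset.range k := by
    ext m
    simp only [Finset.mem_image, Finset.mem_range, mem_lowSet]
    constructor
    · rintro ⟨i, hi, rfl⟩; exact hi
    · intro hm; exact ⟨⟨m, lt_of_lt_of_le hm hk⟩, hm, rfl⟩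
  have := Finset.card_image_of_injective (lowSet n k) (Fin.val_injective)
  rw [h, Finset.card_range] at this
  omega

lemma lowSet_eq_map {n k : ℕ} (hk : k ≤ n) :
    lowSet n k = Finset.univ.map (Fin.castLEEmb hk) := by
  ext i
  simp only [mem_lowSet, Finset.mem_map, Finset.mem_univ, true_and]
  constructor
  · intro hi; exact ⟨⟨i, hi⟩, by simp [Fin.ext_iff]⟩
  · rintro ⟨j, rfl⟩; simpa using j.2

lemma topSum_eq {n : ℕ} (k : ℕ) (x : Fin n → ℝ) :
    topSum k x = ∑ i ∈ lowSet n k, sortDesc x i := by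
  rw [lowSet, Finset.sum_filter]
  rfl

lemma topSum_zero {n : ℕ} (x : Fin n → ℝ) : topSum 0 x = 0 := by
  simp [topSum]

lemma topSum_succ {n : ℕ} (k : ℕ) (hk : k < n) (x : Fin n → ℝ) :
    topSum (k + 1) x = topSum k x + sortDesc x ⟨k, hk⟩ := by
  rw [topSum_eq, topSum_eq]
  have h : lowSet n (k+1) = insert ⟨k, hk⟩ (lowSet n k) := by
    ext i
    simp only [mem_lowSet, Finset.mem_insert, Fin.ext_iff]
    omega
  rw [h, Finset.sum_insert (by simp [mem_lowSet])]
  ring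

lemma topSum_of_ge {n k : ℕ} (hk : n ≤ k) (x : Fin n → ℝ) :
    topSum k x = ∑ i, x i := by
  have h1 : topSum k x = ∑ i, sortDesc x i := by
    apply Finset.sum_congr rfl
    intro i _
    rw [if_pos (lt_of_lt_of_le i.2 hk)]
  rw [h1, sortDesc_eq]
  exact Equiv.sum_comp (sortPerm x) x

lemma strictMono_val_le {k n : ℕ} (f : Fin k → Fin n) (hf : StrictMono f) :
    ∀ i : Fin k, (i : ℕ) ≤ (f i : ℕ) := by
  rintro ⟨m, hm⟩
  induction m with
  | zero => exact Nat.zero_le _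
  | succ p ih =>
    have h1 : (⟨p, Nat.lt_of_succ_lt hm⟩ : Fin k) < ⟨p+1, hm⟩ := by
      simp [Fin.lt_def]
    have h2 := hf h1
    have h3 := ih (Nat.lt_of_succ_lt hm)
    have h4 : (f ⟨p, Nat.lt_of_succ_lt hm⟩ : ℕ) < (f ⟨p+1, hm⟩ : ℕ) := h2
    simp only [Fin.val_mk] at h3 h4 ⊢
    omega

/-- Greedy bound: for antitone `w`, any `k`-subset sum is at most the first-`k` sum. -/
lemma greedy_bound {n : ℕ} {w : Fin n → ℝ} (hw : Antitone w) {A : Finset (Fin n)}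
    {k : ℕ} (hA : A.card = k) : ∑ i ∈ A, w i ≤ ∑ i ∈ lowSet n k, w i := by
  have hkn : k ≤ n := by
    rw [← hA]
    simpa using Finset.card_le_card (Finset.subset_univ A)
  have hrange : Finset.univ.map (A.orderEmbOfFin hA).toEmbedding = A := by
    ext i
    simp only [Finset.mem_map, Finset.mem_univ, true_and]
    constructor
    · rintro ⟨j, rfl⟩; exact A.orderEmbOfFin_mem hA j
    · intro hi
      have : i ∈ Set.range (A.orderEmbOfFin hA) := by
        rw [Finset.range_orderEmbOfFin]; exact hi
      obtain ⟨j, hj⟩ := this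
      exact ⟨j, hj⟩
  rw [← hrange, Finset.sum_map, lowSet_eq_map hkn, Finset.sum_map]
  apply Finset.sum_le_sum
  intro i _
  apply hw
  have := strictMono_val_le (A.orderEmbOfFin hA) (A.orderEmbOfFin hA).strictMono i
  exact Fin.le_def.2 (by simpa using this)

lemma sum_le_topSum {n : ℕ} (x : Fin n → ℝ) (A : Finset (Fin n)) :
    ∑ i ∈ A, x i ≤ topSum A.card x := by
  classical
  set π := sortPerm x
  have hinj : Function.Injective π.symm := π.symm.injective
  have h1 : ∑ i ∈ A, x i = ∑ j ∈ A.image π.symm, sortDesc x j := by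
    rw [Finset.sum_image (fun a _ b _ h => hinj h)]
    apply Finset.sum_congr rfl
    intro i _
    rw [sortDesc_eq]
    simp [π]
  rw [h1, topSum_eq]
  have hcard : (A.image π.symm).card = A.card :=
    Finset.card_image_of_injective A hinj
  rw [← hcard]
  exact greedy_bound (antitone_sortDesc x) rfl

/-- The canonical achiever set for `topSum k x`. -/
noncomputable def topSet {n : ℕ} (k : ℕ) (x : Fin n → ℝ) : Finset (Fin n) :=
  (lowSet n k).image (sortPerm x)

lemma card_topSet {n k : ℕ} (hk : k ≤ n) (x : Fin n → ℝ) : (topSet k x).card = k := by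
  rw [topSet, Finset.card_image_of_injective _ (sortPerm x).injective, card_lowSet hk]

lemma sum_topSet {n : ℕ} (k : ℕ) (x : Fin n → ℝ) :
    ∑ i ∈ topSet k x, x i = topSum k x := by
  rw [topSet, Finset.sum_image (fun a _ b _ h => (sortPerm x).injective h), topSum_eq]
  apply Finset.sum_congr rfl
  intro i _
  rw [sortDesc_eq]
  simp

lemma topSum_comp_perm {n : ℕ} (k : ℕ) (x : Fin n → ℝ) (σ : Equiv.Perm (Fin n)) :
    topSum k (x ∘ σ) = topSum k x := by
  classical
  by_cases hk : k ≤ n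
  · have key : ∀ (y : Fin n → ℝ) (τ : Equiv.Perm (Fin n)),
        topSum k (y ∘ τ) ≤ topSum k y := by
      intro y τ
      have h1 : topSum k (y ∘ τ) = ∑ i ∈ topSet k (y ∘ τ), (y ∘ τ) i :=
        (sum_topSet k (y ∘ τ)).symm
      have h2 : ∑ i ∈ topSet k (y ∘ τ), (y ∘ τ) i
          = ∑ j ∈ (topSet k (y ∘ τ)).image τ, y j := by
        rw [Finset.sum_image (fun a _ b _ h => τ.injective h)]
        rfl
      have h3 := sum_le_topSum y ((topSet k (y ∘ τ)).image τ)
      rw [Finset.card_image_of_injective _ τ.injective, card_topSet hk] at h3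
      rw [h1, h2]; exact h3
    have h4 := key x σ
    have h5 := key (x ∘ σ) σ⁻¹
    have h6 : (x ∘ σ) ∘ ⇑σ⁻¹ = x := by
      funext i
      simp [Equiv.apply_symm_apply]
    rw [h6] at h5
    exact le_antisymm h4 h5
  · push_neg at hk
    rw [topSum_of_ge (le_of_lt hk), topSum_of_ge (le_of_lt hk)]
    exact Equiv.sum_comp σ x

lemma majorizedBy_comp_perm {n : ℕ} (x d : Fin n → ℝ) (σ : Equiv.Perm (Fin n)) :
    MajorizedBy (x ∘ σ) d ↔ MajorizedBy x d := by
  unfold MajorizedBy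
  have hsum : ∑ i, (x ∘ σ) i = ∑ i, x i := Equiv.sum_comp σ x
  rw [hsum]
  constructor
  · rintro ⟨h1, h2⟩
    exact ⟨fun k hk => by rw [← topSum_comp_perm k x σ]; exact h1 k hk, h2⟩
  · rintro ⟨h1, h2⟩
    exact ⟨fun k hk => by rw [topSum_comp_perm k x σ]; exact h1 k hk, h2⟩

lemma topSum_antitone_eq {n : ℕ} {w : Fin n → ℝ} (hw : Antitone w) {k : ℕ} (hk : k ≤ n) :
    topSum k w = ∑ i ∈ lowSet n k, w i := by
  apply le_antisymm
  · rw [← sum_topSet k w]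
    exact greedy_bound hw (card_topSet hk w)
  · have := sum_le_topSum w (lowSet n k)
    rwa [card_lowSet hk] at this

lemma majorized_topSum_le {n : ℕ} {y d : Fin n → ℝ} (hy : MajorizedBy y d) {k : ℕ}
    (hk : k ≤ n) : topSum k y ≤ topSum k d := by
  by_cases h : k ≤ n - 1
  · exact hy.1 k h
  · have hkn : k = n := by omega
    subst hkn
    rw [topSum_of_ge le_rfl, topSum_of_ge le_rfl]
    exact le_of_eq hy.2

lemma topSet_zero {n : ℕ} (x : Fin n → ℝ) : topSet 0 x = ∅ := by
  rw [topSet]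
  have : lowSet n 0 = ∅ := by
    ext i; simp [mem_lowSet]
  rw [this, Finset.image_empty]

lemma topSet_succ {n : ℕ} {k : ℕ} (hk : k < n) (x : Fin n → ℝ) :
    topSet (k+1) x = insert (sortPerm x ⟨k, hk⟩) (topSet k x) := by
  rw [topSet, topSet]
  have h : lowSet n (k+1) = insert ⟨k, hk⟩ (lowSet n k) := by
    ext i
    simp only [mem_lowSet, Finset.mem_insert, Fin.ext_iff]
    omega
  rw [h, Finset.image_insert]

lemma not_mem_topSet {n : ℕ} {k : ℕ} (hk : k < n) (x : Fin n → ℝ) :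
    sortPerm x ⟨k, hk⟩ ∉ topSet k x := by
  rw [topSet]
  simp only [Finset.mem_image, not_exists]
  rintro i ⟨hi, hie⟩
  have := (sortPerm x).injective hie
  rw [mem_lowSet] at hi
  rw [this] at hi
  simp at hi

lemma perm_mem_extremePoints {n : ℕ} (d : Fin n → ℝ) (σ : Equiv.Perm (Fin n)) :
    d ∘ σ ∈ Set.extremePoints ℝ {x : Fin n → ℝ | MajorizedBy x d} := by
  classical
  set z : Fin n → ℝ := d ∘ σ with hzdef
  have hzS : MajorizedBy z d :=
    (majorizedBy_comp_perm d d σ).2 ⟨fun k _ => le_refl _, rfl⟩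
  -- the linear functional
  set f : (Fin n → ℝ) → ℝ := fun y => ∑ k ∈ Finset.range n, ∑ i ∈ topSet (k+1) z, y i
    with hfdef
  have hterm : ∀ (y : Fin n → ℝ), MajorizedBy y d → ∀ k, k ≤ n →
      ∑ i ∈ topSet k z, y i ≤ topSum k d := by
    intro y hy k hk
    calc ∑ i ∈ topSet k z, y i ≤ topSum (topSet k z).card y := sum_le_topSum y _
    _ = topSum k y := by rw [card_topSet hk]
    _ ≤ topSum k d := majorized_topSum_le hy hk
  have hzsum : ∀ k, k ≤ n → ∑ i ∈ topSet k z, z i = topSum k d := by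
    intro k hk
    rw [sum_topSet k z, hzdef, topSum_comp_perm]
  have hfz : f z = ∑ k ∈ Finset.range n, topSum (k+1) d := by
    apply Finset.sum_congr rfl
    intro k hk
    rw [Finset.mem_range] at hk
    exact hzsum (k+1) hk
  have hfle : ∀ (y : Fin n → ℝ), MajorizedBy y d → f y ≤ f z := by
    intro y hy
    rw [hfz]
    apply Finset.sum_le_sum
    intro k hk
    rw [Finset.mem_range] at hk
    exact hterm y hy (k+1) hk
  -- equality case
  have heq : ∀ (y : Fin n → ℝ), MajorizedBy y d → f y = f z → y = z := by
    intro y hy hfy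
    have hall : ∀ k ∈ Finset.range n, ∑ i ∈ topSet (k+1) z, y i = topSum (k+1) d := by
      rw [hfz] at hfy
      have := (Finset.sum_eq_sum_iff_of_le (fun k hk => by
        rw [Finset.mem_range] at hk
        exact hterm y hy (k+1) hk)).1 hfy
      exact this
    have hall' : ∀ k, k ≤ n → ∑ i ∈ topSet k z, y i = topSum k d := by
      intro k hk
      cases k with
      | zero => rw [topSet_zero, Finset.sum_empty, topSum_zero]
      | succ m => exact hall m (Finset.mem_range.2 (by omega))
    funext i
    set j : Fin n := (sortPerm z).symm i with hj
    have hjn : (j : ℕ) < n := j.2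
    have hmk : (⟨(j : ℕ), hjn⟩ : Fin n) = j := by simp
    have hij : i = sortPerm z ⟨(j : ℕ), hjn⟩ := by rw [hmk, hj]; simp
    have hstep : ∀ (u : Fin n → ℝ),
        ∑ t ∈ topSet ((j:ℕ)+1) z, u t = u i + ∑ t ∈ topSet (j:ℕ) z, u t := by
      intro u
      rw [topSet_succ hjn, Finset.sum_insert (not_mem_topSet hjn z), ← hij]
    have hy1 := hstep y
    have hz1 := hstep z
    rw [hall' ((j:ℕ)+1) hjn, hall' (j:ℕ) (le_of_lt hjn)] at hy1
    rw [hzsum ((j:ℕ)+1) hjn, hzsum (j:ℕ) (le_of_lt hjn)] at hz1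
    have : y i = z i := by linarith
    exact this
  -- linearity of f and conclusion
  rw [mem_extremePoints]
  refine ⟨hzS, fun x₁ h₁ x₂ h₂ hseg => ?_⟩
  obtain ⟨a, b, ha, hb, hab, habz⟩ := hseg
  have hflin : f (a • x₁ + b • x₂) = a * f x₁ + b * f x₂ := by
    simp only [hfdef, Pi.add_apply, Pi.smul_apply, smul_eq_mul, Finset.sum_add_distrib,
      Finset.mul_sum]
  rw [habz] at hflin
  have h1 : f x₁ ≤ f z := hfle x₁ h₁
  have h2 : f x₂ ≤ f z := hfle x₂ h₂
  have hfx1 : f x₁ = f z := by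
    by_contra hne
    have hlt : f x₁ < f z := lt_of_le_of_ne h1 hne
    have hm := mul_lt_mul_of_pos_left hlt ha
    have hm2 := mul_le_mul_of_nonneg_left h2 hb.le
    have hone : a * f z + b * f z = f z := by rw [← add_mul, hab, one_mul]
    linarith
  have hfx2 : f x₂ = f z := by
    by_contra hne
    have hlt : f x₂ < f z := lt_of_le_of_ne h2 hne
    have hm := mul_lt_mul_of_pos_left hlt hb
    have hm2 := mul_le_mul_of_nonneg_left h1 ha.le
    have hone : a * f z + b * f z = f z := by rw [← add_mul, hab, one_mul]
    linarith
  exact ⟨heq x₁ h₁ hfx1, heq x₂ h₂ hfx2⟩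

lemma lowSet_succ {n k : ℕ} (hk : k < n) :
    lowSet n (k+1) = insert ⟨k, hk⟩ (lowSet n k) := by
  ext i
  simp only [mem_lowSet, Finset.mem_insert, Fin.ext_iff]
  omega

lemma mk_not_mem_lowSet {n k : ℕ} (hk : k < n) : (⟨k, hk⟩ : Fin n) ∉ lowSet n k := by
  simp [mem_lowSet]

lemma entry_eq {n : ℕ} {w : Fin n → ℝ} (hanti : Antitone w) (i : Fin n) :
    topSum ((i : ℕ) + 1) w = topSum (i : ℕ) w + w i := by
  rw [topSum_antitone_eq hanti (Nat.succ_le_of_lt i.2),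
    topSum_antitone_eq hanti (le_of_lt i.2), lowSet_succ i.2,
    Finset.sum_insert (mk_not_mem_lowSet i.2)]
  simp [Fin.eta]
  ring

lemma sortDesc_entry {n : ℕ} (d : Fin n → ℝ) (i : Fin n) :
    topSum ((i : ℕ) + 1) d = topSum (i : ℕ) d + sortDesc d i := by
  have := topSum_succ (i : ℕ) i.2 d
  simpa [Fin.eta] using this

lemma extreme_comp_perm {n : ℕ} {d : Fin n → ℝ} (π : Equiv.Perm (Fin n))
    {x : Fin n → ℝ} (hx : x ∈ Set.extremePoints ℝ {x : Fin n → ℝ | MajorizedBy x d}) :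
    x ∘ π ∈ Set.extremePoints ℝ {x : Fin n → ℝ | MajorizedBy x d} := by
  rw [mem_extremePoints] at hx ⊢
  obtain ⟨hxS, hxe⟩ := hx
  refine ⟨(majorizedBy_comp_perm x d π).2 hxS, ?_⟩
  intro x₁ h₁ x₂ h₂ hseg
  obtain ⟨a, b, ha, hb, hab, hs⟩ := hseg
  have h₁' : x₁ ∘ ⇑π⁻¹ ∈ {x : Fin n → ℝ | MajorizedBy x d} :=
    (majorizedBy_comp_perm x₁ d π⁻¹).2 h₁
  have h₂' : x₂ ∘ ⇑π⁻¹ ∈ {x : Fin n → ℝ | MajorizedBy x d} :=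
    (majorizedBy_comp_perm x₂ d π⁻¹).2 h₂
  have hseg' : x ∈ openSegment ℝ (x₁ ∘ ⇑π⁻¹) (x₂ ∘ ⇑π⁻¹) := by
    refine ⟨a, b, ha, hb, hab, ?_⟩
    funext i
    have := congrFun hs (π⁻¹ i)
    simpa [Equiv.apply_symm_apply] using this
  obtain ⟨he1, he2⟩ := hxe _ h₁' _ h₂' hseg'
  constructor
  · funext i
    have := congrFun he1 (π i)
    simpa using this
  · funext i
    have := congrFun he2 (π i)
    simpa using this

lemma perturb_majorized {n : ℕ} {d w : Fin n → ℝ} (hanti : Antitone w)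
    (hw : MajorizedBy w d) {m b : ℕ} (hm1 : 1 ≤ m) (hmb : m + 1 ≤ b) (hbn : b ≤ n)
    (hmn : m < n)
    {ε : ℝ} (hε : 0 < ε)
    (hG1 : ∀ i : Fin n, (i : ℕ) < m - 1 → w ⟨m-1, by omega⟩ + 2*ε ≤ w i)
    (hG2 : ∀ j : Fin n, b ≤ (j : ℕ) → w j + 2*ε ≤ w ⟨b-1, by omega⟩)
    (hS : ∀ k, m ≤ k → k < b → topSum k w + ε ≤ topSum k d)
    (p q : Fin n)
    (hpa : w p ≤ w ⟨m-1, by omega⟩) (hqb : w ⟨b-1, by omega⟩ ≤ w q)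
    (hpv : m - 1 ≤ (p : ℕ)) (hqv : (q : ℕ) < b) :
    MajorizedBy (fun i => w i + (if i = p then ε else 0) - (if i = q then ε else 0)) d := by
  classical
  set y : Fin n → ℝ := fun i => w i + (if i = p then ε else 0) - (if i = q then ε else 0)
    with hydef
  have hle : ∀ k', k' ≤ n → topSum k' w ≤ topSum k' d := fun k' h =>
    majorized_topSum_le hw h
  constructor
  · intro k hk
    have hkn : k ≤ n := by omega
    set B := topSet k y with hBdef
    have hBcard : B.card = k := card_topSet hkn y
    have htop : topSum k y = ∑ i ∈ B, y i := (sum_topSet k y).symm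
    have hsumB : ∀ (C : Finset (Fin n)), C.card = k → ∑ i ∈ C, w i ≤ topSum k d := by
      intro C hC
      calc ∑ i ∈ C, w i ≤ topSum C.card w := sum_le_topSum w C
      _ = topSum k w := by rw [hC]
      _ ≤ topSum k d := hle k hkn
    have hsplit : ∑ i ∈ B, y i = ∑ i ∈ B, w i + (if p ∈ B then ε else 0)
        - (if q ∈ B then ε else 0) := by
      rw [hydef]
      rw [Finset.sum_sub_distrib, Finset.sum_add_distrib, Finset.sum_ite_eq' B p fun _ => ε,
        Finset.sum_ite_eq' B q fun _ => ε]
    by_cases hpB : p ∈ B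
    · by_cases hqB : q ∈ B
      · rw [htop, hsplit, if_pos hpB, if_pos hqB]
        have := hsumB B hBcard
        linarith
      · have hval : topSum k y = ∑ i ∈ B, w i + ε := by
          rw [htop, hsplit, if_pos hpB, if_neg hqB]; ring
        rcases lt_or_ge k m with hkm | hkm
        · -- k < m : swap p out for a small-index element
          have hk1 : 1 ≤ k := by
            have h0 := Finset.card_pos.2 ⟨p, hpB⟩
            omega
          have hex : ∃ i0 : Fin n, (i0 : ℕ) < m - 1 ∧ i0 ∉ B := by
            by_contra hc
            push_neg at hc
            have hsub : lowSet n (m-1) ⊆ B.erase p := by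
              intro i hi
              rw [mem_lowSet] at hi
              refine Finset.mem_erase.2 ⟨?_, hc i hi⟩
              intro h
              rw [h] at hi
              omega
            have hcard := Finset.card_le_card hsub
            rw [card_lowSet (by omega), Finset.card_erase_of_mem hpB, hBcard] at hcard
            omega
          obtain ⟨i0, hi0v, hi0B⟩ := hex
          set B' := insert i0 (B.erase p) with hB'def
          have hi0ne : i0 ∉ B.erase p := fun h => hi0B (Finset.mem_of_mem_erase h)
          have hB'card : B'.card = k := by
            rw [hB'def, Finset.card_insert_of_notMem hi0ne,
              Finset.card_erase_of_mem hpB, hBcard]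
            omega
          have hsum' : ∑ i ∈ B', w i = w i0 + (∑ i ∈ B, w i - w p) := by
            rw [hB'def, Finset.sum_insert hi0ne, Finset.sum_erase_eq_sub hpB]
          have hgain : w p + ε ≤ w i0 := by
            have := hG1 i0 hi0v
            linarith
          have := hsumB B' hB'card
          rw [hval]
          linarith
        rcases lt_or_ge k b with hkb | hkb
        · -- m ≤ k < b : use the slack
          have h1 : ∑ i ∈ B, w i ≤ topSum k w := by
            have := sum_le_topSum w B
            rwa [hBcard] at this
          have := hS k hkm hkb
          rw [hval]
          linarith
        · -- b ≤ k : swap a large-index element out for q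
          have hex : ∃ j0, j0 ∈ B ∧ b ≤ (j0 : ℕ) := by
            by_contra hc
            push_neg at hc
            have hsub : B ⊆ (lowSet n b).erase q := by
              intro j hj
              refine Finset.mem_erase.2 ⟨fun h => hqB (h ▸ hj), mem_lowSet.2 (hc j hj)⟩
            have hcard := Finset.card_le_card hsub
            rw [Finset.card_erase_of_mem (mem_lowSet.2 hqv), card_lowSet hbn, hBcard] at hcard
            omega
          obtain ⟨j0, hj0B, hj0v⟩ := hex
          have hqj0 : q ∉ B.erase j0 := fun h => hqB (Finset.mem_of_mem_erase h)
          set B' := insert q (B.erase j0) with hB'def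
          have hB'card : B'.card = k := by
            rw [hB'def, Finset.card_insert_of_notMem hqj0,
              Finset.card_erase_of_mem hj0B, hBcard]
            omega
          have hsum' : ∑ i ∈ B', w i = w q + (∑ i ∈ B, w i - w j0) := by
            rw [hB'def, Finset.sum_insert hqj0, Finset.sum_erase_eq_sub hj0B]
          have hgain : w j0 + ε ≤ w q := by
            have := hG2 j0 hj0v
            linarith
          have := hsumB B' hB'card
          rw [hval]
          linarith
    · -- p ∉ B
      have hval : topSum k y ≤ ∑ i ∈ B, w i := by
        rw [htop, hsplit, if_neg hpB]
        split_ifs with h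
        · linarith
        · linarith
      have := hsumB B hBcard
      linarith
  · -- total sums
    have h1 : ∑ i, y i = ∑ i, w i := by
      rw [hydef]
      rw [Finset.sum_sub_distrib, Finset.sum_add_distrib,
        Finset.sum_ite_eq' Finset.univ p fun _ => ε,
        Finset.sum_ite_eq' Finset.univ q fun _ => ε]
      simp
    rw [h1]
    exact hw.2

lemma antitone_extreme {n : ℕ} {d w : Fin n → ℝ} (hanti : Antitone w)
    (hw : w ∈ Set.extremePoints ℝ {x : Fin n → ℝ | MajorizedBy x d}) :
    w = sortDesc d := by
  classical
  rw [mem_extremePoints] at hw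
  obtain ⟨hwS, hwe⟩ := hw
  have hwS' : MajorizedBy w d := hwS
  have hle : ∀ k, k ≤ n → topSum k w ≤ topSum k d := fun k h =>
    majorized_topSum_le hwS' h
  have htot : ∀ k, n ≤ k → topSum k w = topSum k d := by
    intro k h
    rw [topSum_of_ge h, topSum_of_ge h]
    exact hwS'.2
  by_contra hne
  have hex : ∃ k, topSum k w < topSum k d := by
    by_contra hc
    push_neg at hc
    apply hne
    have hall : ∀ k, topSum k w = topSum k d := by
      intro k
      by_cases h : k ≤ n
      · exact le_antisymm (hle k h) (hc k)
      · exact htot k (by omega)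
    funext i
    have h1 := entry_eq hanti i
    have h2 := sortDesc_entry d i
    have h3 := hall ((i : ℕ) + 1)
    have h4 := hall (i : ℕ)
    linarith
  set m := Nat.find hex with hmdef
  have hm : topSum m w < topSum m d := Nat.find_spec hex
  have hmn : m < n := by
    by_contra h
    push_neg at h
    have := htot m h
    linarith
  have hm1 : 1 ≤ m := by
    by_contra h
    push_neg at h
    have hm0 : m = 0 := by omega
    rw [hm0, topSum_zero, topSum_zero] at hm
    linarith
  have heqlow : ∀ k, k < m → topSum k w = topSum k d := by
    intro k hk
    have h1 := Nat.find_min hex hk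
    exact le_antisymm (hle k (by omega)) (not_lt.1 h1)
  have hexb : ∃ k, m ≤ k ∧ topSum k w = topSum k d :=
    ⟨n, by omega, htot n le_rfl⟩
  set b := Nat.find hexb with hbdef
  obtain ⟨hbm, hbeq⟩ := Nat.find_spec hexb
  rw [← hbdef] at hbm hbeq
  have hbn : b ≤ n := Nat.find_le ⟨by omega, htot n le_rfl⟩
  have hmb : m + 1 ≤ b := by
    rcases Nat.lt_or_ge m b with h | h
    · omega
    · have : b = m := by omega
      rw [this] at hbeq
      linarith
  have hstrict : ∀ k, m ≤ k → k < b → topSum k w < topSum k d := by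
    intro k h1 h2
    have h3 := Nat.find_min hexb h2
    push_neg at h3
    exact lt_of_le_of_ne (hle k (by omega)) (h3 h1)
  have hm1n : m - 1 < n := by omega
  have hb1n : b - 1 < n := by omega
  have hm2n : m - 2 < n := by omega
  set ia : Fin n := ⟨m-1, hm1n⟩ with hiadef
  set ib1 : Fin n := ⟨b-1, hb1n⟩ with hib1def
  set gA : ℝ := if 2 ≤ m then w ⟨m-2, hm2n⟩ - w ia else 1 with hgAdef
  set gB : ℝ := if hbn' : b < n then w ib1 - w ⟨b, hbn'⟩ else 1 with hgBdef
  have hIcc : (Finset.Icc m (b-1)).Nonempty := Finset.nonempty_Icc.2 (by omega)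
  set sl : ℝ := (Finset.Icc m (b-1)).inf' hIcc (fun k => topSum k d - topSum k w)
    with hsldef
  set ε : ℝ := min (min gA gB) sl / 2 with hεdef
  -- positivity of the gaps
  have hgA0 : 0 < gA := by
    rw [hgAdef]
    split_ifs with h2m
    · have e1 := entry_eq hanti ⟨m-2, hm2n⟩
      have e2 := entry_eq hanti ia
      have f1 := sortDesc_entry d ⟨m-2, hm2n⟩
      have f2 := sortDesc_entry d ia
      simp only [Fin.val_mk, hiadef] at e1 e2 f1 f2
      rw [show m - 2 + 1 = m - 1 from by omega] at e1 f1
      rw [show m - 1 + 1 = m from by omega] at e2 f2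
      have g1 := heqlow (m-1) (by omega)
      have g2 := heqlow (m-2) (by omega)
      have g3 : sortDesc d ⟨m-1, hm1n⟩ ≤ sortDesc d ⟨m-2, hm2n⟩ :=
        antitone_sortDesc d (by simp [Fin.le_def]; omega)
      rw [hiadef] at *
      linarith
    · norm_num
  have hgB0 : 0 < gB := by
    rw [hgBdef]
    split_ifs with hbn'
    · have e1 := entry_eq hanti ib1
      have e2 := entry_eq hanti ⟨b, hbn'⟩
      have f1 := sortDesc_entry d ib1
      have f2 := sortDesc_entry d ⟨b, hbn'⟩
      simp only [Fin.val_mk, hib1def] at e1 e2 f1 f2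
      rw [show b - 1 + 1 = b from by omega] at e1 f1
      have g1 := hstrict (b-1) (by omega) (by omega)
      have g2 : sortDesc d ⟨b, hbn'⟩ ≤ sortDesc d ⟨b-1, hb1n⟩ :=
        antitone_sortDesc d (by simp only [Fin.mk_le_mk]; omega)
      have g3 := hle (b+1) (by omega)
      rw [hib1def] at *
      linarith
    · norm_num
  have hsl0 : 0 < sl := by
    rw [hsldef, Finset.lt_inf'_iff]
    intro k hk
    rw [Finset.mem_Icc] at hk
    have := hstrict k hk.1 (by omega)
    linarith
  have hmin0 : 0 < min (min gA gB) sl := lt_min (lt_min hgA0 hgB0) hsl0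
  have hε0 : 0 < ε := by rw [hεdef]; linarith
  have hεgA : 2 * ε ≤ gA := by
    have h1 : min (min gA gB) sl ≤ gA := le_trans (min_le_left _ _) (min_le_left _ _)
    rw [hεdef]; linarith
  have hεgB : 2 * ε ≤ gB := by
    have h1 : min (min gA gB) sl ≤ gB := le_trans (min_le_left _ _) (min_le_right _ _)
    rw [hεdef]; linarith
  have hεsl : ε ≤ sl := by
    have h1 : min (min gA gB) sl ≤ sl := min_le_right _ _
    rw [hεdef]; linarith
  -- the three hypotheses of the perturbation lemma
  have hG1 : ∀ i : Fin n, (i : ℕ) < m - 1 → w ia + 2*ε ≤ w i := by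
    intro i hi
    have h2m : 2 ≤ m := by omega
    have hgAeq : gA = w ⟨m-2, hm2n⟩ - w ia := by rw [hgAdef, if_pos h2m]
    have hmono : w ⟨m-2, hm2n⟩ ≤ w i := hanti (by simp [Fin.le_def]; omega)
    linarith
  have hG2 : ∀ j : Fin n, b ≤ (j : ℕ) → w j + 2*ε ≤ w ib1 := by
    intro j hj
    have hbn' : b < n := lt_of_le_of_lt hj j.2
    have hgBeq : gB = w ib1 - w ⟨b, hbn'⟩ := by rw [hgBdef, dif_pos hbn']
    have hmono : w j ≤ w ⟨b, hbn'⟩ := hanti (by simp [Fin.le_def]; omega)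
    linarith
  have hS : ∀ k, m ≤ k → k < b → topSum k w + ε ≤ topSum k d := by
    intro k h1 h2
    have hksl : sl ≤ topSum k d - topSum k w :=
      Finset.inf'_le _ (Finset.mem_Icc.2 ⟨h1, by omega⟩)
    linarith
  -- the two perturbed points
  have hwia : w ib1 ≤ w ia := hanti (Fin.mk_le_mk.2 (by omega) : (⟨m-1, hm1n⟩ : Fin n) ≤ ⟨b-1, hb1n⟩)
  have hu := perturb_majorized hanti hwS' hm1 hmb hbn hmn hε0 hG1 hG2 hS ia ib1
    (le_refl _) (le_refl _) (le_refl _) (by simp only [hib1def, Fin.val_mk]; omega)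
  have hv := perturb_majorized hanti hwS' hm1 hmb hbn hmn hε0 hG1 hG2 hS ib1 ia
    hwia hwia (by simp only [hib1def, Fin.val_mk]; omega)
    (by simp only [hiadef, Fin.val_mk]; omega)
  set u : Fin n → ℝ := fun i => w i + (if i = ia then ε else 0) - (if i = ib1 then ε else 0)
    with hudef
  set v : Fin n → ℝ := fun i => w i + (if i = ib1 then ε else 0) - (if i = ia then ε else 0)
    with hvdef
  have hne_ab : ia ≠ ib1 := by
    rw [hiadef, hib1def]
    simp [Fin.ext_iff]
    omega
  have hseg : w ∈ openSegment ℝ u v := by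
    refine ⟨1/2, 1/2, by norm_num, by norm_num, by norm_num, ?_⟩
    funext i
    simp only [Pi.add_apply, Pi.smul_apply, smul_eq_mul, hudef, hvdef]
    split_ifs <;> ring
  have hres := hwe u hu v hv hseg
  have hcontra := congrFun hres.1 ia
  rw [hudef] at hcontra
  simp [hne_ab] at hcontra
  linarith [hcontra]

theorem stmt18 (n : ℕ) (d : Fin n → ℝ) :
    Set.extremePoints ℝ {x : Fin n → ℝ | MajorizedBy x d} =
      {x : Fin n → ℝ | ∃ σ : Equiv.Perm (Fin n), x = d ∘ σ} := by
  ext x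
  simp only [Set.mem_setOf_eq]
  constructor
  · intro hx
    have hx' := extreme_comp_perm (sortPerm x) hx
    have hsx : x ∘ ⇑(sortPerm x) = sortDesc x := (sortDesc_eq x).symm
    rw [hsx] at hx'
    have heq : sortDesc x = sortDesc d := antitone_extreme (antitone_sortDesc x) hx'
    refine ⟨(sortPerm x)⁻¹.trans (sortPerm d), ?_⟩
    funext i
    have h1 := congrFun heq ((sortPerm x)⁻¹ i)
    rw [sortDesc_eq x, sortDesc_eq d] at h1
    simpa [Equiv.apply_symm_apply] using h1
  · rintro ⟨σ, rfl⟩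
    exact perm_mem_extremePoints d σ
end
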